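/- Let V be a finite type, c : V → V → ℝ≥0 a capacity function, S ⊆ V a subset, P ≥ 1 an integer, and s, t distinct vertices of V with s ∉ S and t ∉ S. Assume that c u v = 0 whenever u ∉ S and v ∉ S. Then the maximum s-t flow value of the P-fold replication c_P of S equals P times the maximum s-t flow value of c. -/

import Mathlib

/-!
STATEMENT 7: If `c u v = 0` whenever `u ∉ S` and `v ∉ S`, then the maximum s-t flow
value of the P-fold replication of `S` equals `P` times the maximum s-t flow value of `c`.
-/

open Finset
open Pointwise

attribute [local instance] Classical.propDecidable

noncomputable section

/-- `f` is an `s`-`t` flow for the capacity function `c`. -/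
def IsFlow {W : Type*} [Fintype W] (c : W → W → NNReal) (s t : W) (f : W → W → ℝ) : Prop :=
  (∀ u v, 0 ≤ f u v ∧ f u v ≤ (c u v : ℝ)) ∧
  ∀ v, v ≠ s → v ≠ t → (∑ u, f u v) = (∑ w, f v w)

/-- The value of a flow `f` with source `s`. -/
def flowValue {W : Type*} [Fintype W] (f : W → W → ℝ) (s : W) : ℝ :=
  (∑ w, f s w) - (∑ u, f u s)

/-- The maximum `s`-`t` flow value (the greatest value attained by an `s`-`t` flow). -/
def maxFlowValue {W : Type*} [Fintype W] (c : W → W → NNReal) (s t : W) : ℝ :=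
  sSup {μ : ℝ | ∃ f, IsFlow c s t f ∧ flowValue f s = μ}

/-- The capacity function of the `P`-fold replication of the subset `S`. -/
def repCap {V : Type*} (c : V → V → NNReal) (S : Set V) (P : ℕ) :
    ({v : V // v ∉ S} ⊕ (↥S × Fin P)) → ({v : V // v ∉ S} ⊕ (↥S × Fin P)) → NNReal
  | Sum.inl u, Sum.inl v => c u.1 v.1
  | Sum.inl u, Sum.inr (v, _) => c u.1 v.1
  | Sum.inr (v, _), Sum.inl u => c v.1 u.1
  | Sum.inr (u, i), Sum.inr (v, j) => if i = j then c u.1 v.1 else 0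

section Aux

variable {V : Type*} [Fintype V] {S : Set V} {P : ℕ}

/-- split a sum over `V` into the `S` part and the non-`S` part. -/
private lemma sum_split (S : Set V) (g : V → ℝ) :
    ∑ v, g v = (∑ v : ↥S, g v.1) + ∑ v : {v : V // v ∉ S}, g v.1 :=
  (Fintype.sum_subtype_add_sum_subtype (· ∈ S) g).symm

/-- the replicated flow -/
def repFlow (S : Set V) (P : ℕ) (f : V → V → ℝ) :
    ({v : V // v ∉ S} ⊕ (↥S × Fin P)) → ({v : V // v ∉ S} ⊕ (↥S × Fin P)) → ℝ
  | Sum.inl u, Sum.inl v => f u.1 v.1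
  | Sum.inl u, Sum.inr (v, _) => f u.1 v.1
  | Sum.inr (v, _), Sum.inl u => f v.1 u.1
  | Sum.inr (u, i), Sum.inr (v, j) => if i = j then f u.1 v.1 else 0

/-- the canonical map from `V` (with a copy index) into the replicated vertex type -/
def emb (S : Set V) (P : ℕ) (v : V) (i : Fin P) : {v : V // v ∉ S} ⊕ (↥S × Fin P) :=
  if h : v ∈ S then Sum.inr (⟨v, h⟩, i) else Sum.inl ⟨v, h⟩

/-- the averaged (projected) flow -/
def projFlow (S : Set V) (P : ℕ)
    (F : ({v : V // v ∉ S} ⊕ (↥S × Fin P)) → ({v : V // v ∉ S} ⊕ (↥S × Fin P)) → ℝ)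
    (u v : V) : ℝ :=
  (1 / (P : ℝ)) * ∑ i : Fin P, F (emb S P u i) (emb S P v i)

lemma repCap_emb (c : V → V → NNReal) (u v : V) (i : Fin P) :
    repCap c S P (emb S P u i) (emb S P v i) = c u v := by
  unfold emb
  split_ifs <;> simp [repCap]

lemma key1 (i : Fin P) (G : ({v : V // v ∉ S} ⊕ (↥S × Fin P)) → ℝ)
    (hG : ∀ (u : ↥S) (j : Fin P), j ≠ i → G (Sum.inr (u, j)) = 0) :
    ∑ u : V, G (emb S P u i) = ∑ w, G w := by
  rw [sum_split S (fun u => G (emb S P u i)), Fintype.sum_sum_type,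
    Fintype.sum_prod_type]
  have h1 : ∀ u : ↥S, G (emb S P u.1 i) = ∑ j : Fin P, G (Sum.inr (u, j)) := by
    intro u
    rw [Finset.sum_eq_single i (fun j _ hj => hG u j hj) (by simp)]
    simp [emb, u.2]
  have h2 : ∀ u : {v : V // v ∉ S}, G (emb S P u.1 i) = G (Sum.inl u) := by
    intro u; simp [emb, u.2]
  rw [Finset.sum_congr rfl (fun u _ => h1 u), Finset.sum_congr rfl (fun u _ => h2 u)]
  ring

lemma key2 (G : ({v : V // v ∉ S} ⊕ (↥S × Fin P)) → ℝ)
    (hG : ∀ u : {v : V // v ∉ S}, G (Sum.inl u) = 0) :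
    ∑ u : V, ∑ i : Fin P, G (emb S P u i) = ∑ w, G w := by
  rw [sum_split S (fun u => ∑ i : Fin P, G (emb S P u i)), Fintype.sum_sum_type,
    Fintype.sum_prod_type]
  have h1 : ∀ u : ↥S, (∑ i : Fin P, G (emb S P u.1 i)) = ∑ j : Fin P, G (Sum.inr (u, j)) := by
    intro u; apply Finset.sum_congr rfl; intro j _; simp [emb, u.2]
  have h2 : ∀ u : {v : V // v ∉ S}, (∑ i : Fin P, G (emb S P u.1 i)) = 0 := by
    intro u
    have : ∀ i : Fin P, G (emb S P u.1 i) = 0 := by intro i; simp [emb, u.2, hG]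
    simp [this]
  rw [Finset.sum_congr rfl (fun u _ => h1 u), Finset.sum_congr rfl (fun u _ => h2 u)]
  simp [hG]

/-- the sums of the replicated flow -/
lemma rep_sum_r (f : V → V → ℝ) (g : V → ℝ) (i : Fin P)
    (H : ({v : V // v ∉ S} ⊕ (↥S × Fin P)) → ℝ)
    (hl : ∀ u : {v : V // v ∉ S}, H (Sum.inl u) = g u.1)
    (hr : ∀ (u : ↥S) (j : Fin P), H (Sum.inr (u, j)) = if j = i then g u.1 else 0) :
    ∑ w, H w = ∑ u, g u := by
  rw [Fintype.sum_sum_type, Fintype.sum_prod_type, sum_split S g]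
  have h1 : ∀ u : ↥S, (∑ j : Fin P, H (Sum.inr (u, j))) = g u.1 := by
    intro u
    rw [Finset.sum_congr rfl (fun j _ => hr u j)]
    simp
  rw [Finset.sum_congr rfl (fun u (_ : u ∈ univ) => hl u),
    Finset.sum_congr rfl (fun u (_ : u ∈ univ) => h1 u)]
  ring

lemma rep_sum_l (f : V → V → ℝ) (g : V → ℝ)
    (hg : ∀ u, u ∉ S → g u = 0)
    (H : ({v : V // v ∉ S} ⊕ (↥S × Fin P)) → ℝ)
    (hl : ∀ u : {v : V // v ∉ S}, H (Sum.inl u) = g u.1)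
    (hr : ∀ (u : ↥S) (j : Fin P), H (Sum.inr (u, j)) = g u.1) :
    ∑ w, H w = P * ∑ u, g u := by
  rw [Fintype.sum_sum_type, Fintype.sum_prod_type, sum_split S g]
  have h1 : ∀ u : ↥S, (∑ j : Fin P, H (Sum.inr (u, j))) = P * g u.1 := by
    intro u
    rw [Finset.sum_congr rfl (fun j _ => hr u j)]
    simp [mul_comm]
  have h2 : ∀ u : {v : V // v ∉ S}, H (Sum.inl u) = 0 := fun u => by
    rw [hl u, hg u.1 u.2]
  rw [Finset.sum_congr rfl (fun u (_ : u ∈ univ) => h2 u),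
    Finset.sum_congr rfl (fun u (_ : u ∈ univ) => h1 u)]
  have h3 : ∀ u : {v : V // v ∉ S}, g u.1 = 0 := fun u => hg u.1 u.2
  rw [Finset.sum_congr rfl (fun u (_ : u ∈ univ) => h3 u)]
  simp [Finset.mul_sum]

end Aux

theorem maxFlow_repCap_eq_P_mul_maxFlow {V : Type*} [Fintype V]
    (c : V → V → NNReal) (S : Set V) (P : ℕ) (hP : 1 ≤ P)
    (s t : V) (hst : s ≠ t) (hs : s ∉ S) (ht : t ∉ S)
    (hzero : ∀ u v, u ∉ S → v ∉ S → c u v = 0) :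
    maxFlowValue (repCap c S P) (Sum.inl ⟨s, hs⟩) (Sum.inl ⟨t, ht⟩) =
      (P : ℝ) * maxFlowValue c s t := by
  have hP0 : (P : ℝ) ≠ 0 := by positivity
  set s' : {v : V // v ∉ S} ⊕ (↥S × Fin P) := Sum.inl ⟨s, hs⟩ with hs'
  set t' : {v : V // v ∉ S} ⊕ (↥S × Fin P) := Sum.inl ⟨t, ht⟩ with ht'
  -- Direction 1 : from a flow on c, get a flow on repCap with P times the value
  have dir1 : ∀ f, IsFlow c s t f →
      IsFlow (repCap c S P) s' t' (repFlow S P f) ∧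
      flowValue (repFlow S P f) s' = P * flowValue f s := by
    intro f hf
    have hf0 : ∀ u v, u ∉ S → v ∉ S → f u v = 0 := by
      intro u v hu hv
      have h1 := (hf.1 u v).1
      have h2 := (hf.1 u v).2
      rw [hzero u v hu hv] at h2
      simpa using le_antisymm (by simpa using h2) h1
    -- capacity constraints
    have hcap : ∀ x y, 0 ≤ repFlow S P f x y ∧ repFlow S P f x y ≤ (repCap c S P x y : ℝ) := by
      rintro (u | ⟨u, i⟩) (v | ⟨v, j⟩) <;> simp only [repFlow, repCap]
      · exact hf.1 u.1 v.1
      · exact hf.1 u.1 v.1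
      · exact hf.1 u.1 v.1
      · split_ifs with h
        · simpa using hf.1 u.1 v.1
        · simp
    -- sums into / out of vertices
    have hinr : ∀ (v : ↥S) (i : Fin P),
        (∑ w, repFlow S P f w (Sum.inr (v, i))) = ∑ u, f u v.1 := by
      intro v i
      exact rep_sum_r f (fun u => f u v.1) i _ (fun u => rfl) (fun u j => rfl)
    have houtr : ∀ (v : ↥S) (i : Fin P),
        (∑ w, repFlow S P f (Sum.inr (v, i)) w) = ∑ u, f v.1 u := by
      intro v i
      refine rep_sum_r f (fun u => f v.1 u) i _ (fun u => rfl) (fun u j => ?_)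
      simp only [repFlow]
      simp [eq_comm]
    have hinl : ∀ (v : {v : V // v ∉ S}),
        (∑ w, repFlow S P f w (Sum.inl v)) = P * ∑ u, f u v.1 := by
      intro v
      exact rep_sum_l f (fun u => f u v.1) (fun u hu => hf0 u v.1 hu v.2) _
        (fun u => rfl) (fun u j => rfl)
    have houtl : ∀ (v : {v : V // v ∉ S}),
        (∑ w, repFlow S P f (Sum.inl v) w) = P * ∑ u, f v.1 u := by
      intro v
      exact rep_sum_l f (fun u => f v.1 u) (fun u hu => hf0 v.1 u v.2 hu) _
        (fun u => rfl) (fun u j => rfl)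
    refine ⟨⟨hcap, ?_⟩, ?_⟩
    · rintro (v | ⟨v, i⟩) hvs hvt
      · have hv1 : v.1 ≠ s := by
          intro h
          exact hvs (by rw [hs']; exact congrArg Sum.inl (Subtype.ext h))
        have hv2 : v.1 ≠ t := by
          intro h
          exact hvt (by rw [ht']; exact congrArg Sum.inl (Subtype.ext h))
        rw [hinl v, houtl v, hf.2 v.1 hv1 hv2]
      · have hv1 : v.1 ≠ s := fun h => hs (h ▸ v.2)
        have hv2 : v.1 ≠ t := fun h => ht (h ▸ v.2)
        rw [hinr v i, houtr v i, hf.2 v.1 hv1 hv2]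
    · show (∑ w, repFlow S P f s' w) - (∑ u, repFlow S P f u s') = _
      rw [hs', hinl ⟨s, hs⟩, houtl ⟨s, hs⟩]
      simp [flowValue]; ring
  -- Direction 2 : from a flow on repCap, get a flow on c with 1/P times the value
  have dir2 : ∀ F, IsFlow (repCap c S P) s' t' F →
      IsFlow c s t (projFlow S P F) ∧
      flowValue (projFlow S P F) s = (1 / (P : ℝ)) * flowValue F s' := by
    intro F hF
    have hFnn : ∀ x y, 0 ≤ F x y := fun x y => (hF.1 x y).1
    have hFc : ∀ x y, F x y ≤ (repCap c S P x y : ℝ) := fun x y => (hF.1 x y).2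
    have hzeroF : ∀ x y, repCap c S P x y = 0 → F x y = 0 := by
      intro x y h
      have := hFc x y
      rw [h] at this
      exact le_antisymm (by simpa using this) (hFnn x y)
    have hcross : ∀ (u v : ↥S) (i j : Fin P), i ≠ j →
        F (Sum.inr (u, i)) (Sum.inr (v, j)) = 0 := by
      intro u v i j hij
      exact hzeroF _ _ (by simp [repCap, hij])
    have hll : ∀ (u v : {v : V // v ∉ S}), F (Sum.inl u) (Sum.inl v) = 0 := by
      intro u v
      exact hzeroF _ _ (by simp [repCap, hzero u.1 v.1 u.2 v.2])
    -- capacity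
    have hcap : ∀ u v, 0 ≤ projFlow S P F u v ∧ projFlow S P F u v ≤ (c u v : ℝ) := by
      intro u v
      constructor
      · apply mul_nonneg (by positivity)
        exact Finset.sum_nonneg fun i _ => hFnn _ _
      · unfold projFlow
        rw [div_mul_eq_mul_div, one_mul, div_le_iff₀ (by positivity)]
        calc (∑ i : Fin P, F (emb S P u i) (emb S P v i))
            ≤ ∑ i : Fin P, (c u v : ℝ) := by
              apply Finset.sum_le_sum
              intro i _
              have := hFc (emb S P u i) (emb S P v i)
              rwa [repCap_emb c u v i] at this
          _ = (c u v : ℝ) * P := by simp [mul_comm]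
    -- sum identities
    have hsum_in_S : ∀ (v : V) (hv : v ∈ S),
        (∑ u, projFlow S P F u v) = (1 / (P : ℝ)) * ∑ i : Fin P, ∑ w, F w (Sum.inr (⟨v, hv⟩, i)) := by
      intro v hv
      unfold projFlow
      rw [← Finset.mul_sum, Finset.sum_comm]
      congr 1
      apply Finset.sum_congr rfl
      intro i _
      have he : emb S P v i = Sum.inr (⟨v, hv⟩, i) := by simp [emb, hv]
      rw [Finset.sum_congr rfl (fun u (_ : u ∈ univ) => by rw [he])]
      exact key1 i (fun w => F w (Sum.inr (⟨v, hv⟩, i)))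
        (fun u j hj => hcross u ⟨v, hv⟩ j i hj)
    have hsum_out_S : ∀ (v : V) (hv : v ∈ S),
        (∑ u, projFlow S P F v u) = (1 / (P : ℝ)) * ∑ i : Fin P, ∑ w, F (Sum.inr (⟨v, hv⟩, i)) w := by
      intro v hv
      unfold projFlow
      rw [← Finset.mul_sum, Finset.sum_comm]
      congr 1
      apply Finset.sum_congr rfl
      intro i _
      have he : emb S P v i = Sum.inr (⟨v, hv⟩, i) := by simp [emb, hv]
      rw [Finset.sum_congr rfl (fun u (_ : u ∈ univ) => by rw [he])]
      exact key1 i (fun w => F (Sum.inr (⟨v, hv⟩, i)) w)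
        (fun u j hj => hcross ⟨v, hv⟩ u i j (Ne.symm hj))
    have hsum_in_nS : ∀ (v : V) (hv : v ∉ S),
        (∑ u, projFlow S P F u v) = (1 / (P : ℝ)) * ∑ w, F w (Sum.inl ⟨v, hv⟩) := by
      intro v hv
      unfold projFlow
      rw [← Finset.mul_sum]
      congr 1
      have he : ∀ i : Fin P, emb S P v i = Sum.inl ⟨v, hv⟩ := by
        intro i; simp [emb, hv]
      rw [Finset.sum_congr rfl (fun u (_ : u ∈ univ) =>
        Finset.sum_congr rfl (fun i _ => by rw [he i]))]
      exact key2 (fun w => F w (Sum.inl ⟨v, hv⟩)) (fun u => hll u ⟨v, hv⟩)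
    have hsum_out_nS : ∀ (v : V) (hv : v ∉ S),
        (∑ u, projFlow S P F v u) = (1 / (P : ℝ)) * ∑ w, F (Sum.inl ⟨v, hv⟩) w := by
      intro v hv
      unfold projFlow
      rw [← Finset.mul_sum]
      congr 1
      have he : ∀ i : Fin P, emb S P v i = Sum.inl ⟨v, hv⟩ := by
        intro i; simp [emb, hv]
      rw [Finset.sum_congr rfl (fun u (_ : u ∈ univ) =>
        Finset.sum_congr rfl (fun i _ => by rw [he i]))]
      exact key2 (fun w => F (Sum.inl ⟨v, hv⟩) w) (fun u => hll ⟨v, hv⟩ u)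
    refine ⟨⟨hcap, ?_⟩, ?_⟩
    · intro v hvs hvt
      by_cases hv : v ∈ S
      · rw [hsum_in_S v hv, hsum_out_S v hv]
        congr 1
        apply Finset.sum_congr rfl
        intro i _
        exact hF.2 (Sum.inr (⟨v, hv⟩, i)) (by simp [hs']) (by simp [ht'])
      · rw [hsum_in_nS v hv, hsum_out_nS v hv]
        congr 1
        exact hF.2 (Sum.inl ⟨v, hv⟩)
          (by simp [hs', Subtype.ext_iff]; exact hvs)
          (by simp [ht', Subtype.ext_iff]; exact hvt)
    · show (∑ w, projFlow S P F s w) - (∑ u, projFlow S P F u s) = _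
      rw [hsum_out_nS s hs, hsum_in_nS s hs]
      simp only [flowValue, hs']
      ring
  -- the sets of flow values
  have hset : {μ : ℝ | ∃ F, IsFlow (repCap c S P) s' t' F ∧ flowValue F s' = μ} =
      (P : ℝ) • {μ : ℝ | ∃ f, IsFlow c s t f ∧ flowValue f s = μ} := by
    ext μ
    constructor
    · rintro ⟨F, hF, rfl⟩
      obtain ⟨hflow, hval⟩ := dir2 F hF
      refine ⟨flowValue (projFlow S P F) s, ⟨projFlow S P F, hflow, rfl⟩, ?_⟩
      rw [hval]
      field_simp
      rw [smul_eq_mul]; field_simp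
    · rintro ⟨ν, ⟨f, hf, rfl⟩, rfl⟩
      obtain ⟨hflow, hval⟩ := dir1 f hf
      exact ⟨repFlow S P f, hflow, by rw [hval]; simp [smul_eq_mul]⟩
  unfold maxFlowValue
  rw [hset, Real.sSup_smul_of_nonneg (by positivity), smul_eq_mul]

end
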